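/- Let d ≥ 1, H ∈ ℕ, and let μ_src and μ_tgt be Borel probability measures on ℝ^d with finite second moments. Suppose there exists a measurable map M⋆ : ℝ^d → ℝ^d with (M⋆)_# μ_src = μ_tgt and ½∫‖M⋆(x) − x‖² dμ_src(x) = W₂²(μ_src, μ_tgt) (an optimal Monge map). Then there exist measurable maps π⋆_0,…,π⋆_H : ℝ^d → ℝ^d that are feasible for transporting μ_src to μ_tgt and whose dynamic cost equals W₂²(μ_src, μ_tgt); moreover these maps may be chosen so that π̄⋆_h(x) = x + ((h+1)/(H+1))·(M⋆(x) − x) for μ_src-almost every x and every h ∈ {0,…,H}. -/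

import Mathlib

open MeasureTheory ENNReal

/-- The squared Wasserstein-2 distance. -/
noncomputable def W2sq {d : ℕ} (μ ν : Measure (EuclideanSpace ℝ (Fin d))) : ℝ≥0∞ :=
  ⨅ (γ : Measure (EuclideanSpace ℝ (Fin d) × EuclideanSpace ℝ (Fin d)))
    (_ : IsProbabilityMeasure γ ∧ γ.map Prod.fst = μ ∧ γ.map Prod.snd = ν),
      2⁻¹ * ∫⁻ p, (‖p.1 - p.2‖₊ : ℝ≥0∞) ^ 2 ∂γ

/-- `trajComp π h = π̄_{h-1} = π_{h-1} ∘ ⋯ ∘ π_0`, with `trajComp π 0 = π̄_{-1} = id`. -/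
def trajComp {α : Type*} (π : ℕ → α → α) : ℕ → α → α
  | 0 => id
  | n + 1 => π n ∘ trajComp π n

open scoped RealInnerProductSpace
open Set

section aux
variable {F : Type*} [NormedAddCommGroup F]

lemma enorm_sq_eq (v : F) : (‖v‖₊ : ℝ≥0∞)^2 = ENNReal.ofReal (‖v‖^2) := by
  rw [ENNReal.ofReal_pow (norm_nonneg v), ofReal_norm, enorm_eq_nnnorm]

lemma enorm_sq_sub_le (a b : F) :
    (‖a - b‖₊ : ℝ≥0∞)^2 ≤ 2 * (‖a‖₊ : ℝ≥0∞)^2 + 2 * (‖b‖₊ : ℝ≥0∞)^2 := by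
  have h : ‖a - b‖^2 ≤ 2 * ‖a‖^2 + 2 * ‖b‖^2 := by
    have h1 : ‖a - b‖ ≤ ‖a‖ + ‖b‖ := norm_sub_le a b
    nlinarith [norm_nonneg (a - b), norm_nonneg a, norm_nonneg b, sq_nonneg (‖a‖ - ‖b‖), mul_self_le_mul_self (norm_nonneg (a - b)) h1]
  calc (‖a - b‖₊ : ℝ≥0∞)^2 = ENNReal.ofReal (‖a - b‖^2) := enorm_sq_eq _
    _ ≤ ENNReal.ofReal (2 * ‖a‖^2 + 2 * ‖b‖^2) := ENNReal.ofReal_le_ofReal h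
    _ = 2 * (‖a‖₊ : ℝ≥0∞)^2 + 2 * (‖b‖₊ : ℝ≥0∞)^2 := by
        rw [ENNReal.ofReal_add (by positivity) (by positivity),
          ENNReal.ofReal_mul (by norm_num), ENNReal.ofReal_mul (by norm_num),
          ← enorm_sq_eq, ← enorm_sq_eq]
        norm_num

end aux

section swapid
variable {F : Type*} [NormedAddCommGroup F] [InnerProductSpace ℝ F]

lemma swap_identity (x x' y y' : F) :
    ‖x - y'‖^2 + ‖x' - y‖^2 = ‖x - y‖^2 + ‖x' - y'‖^2 + 2 * ⟪x - x', y - y'⟫ := by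
  simp only [norm_sub_sq_real, inner_sub_left, inner_sub_right]
  ring
end swapid

lemma enorm_sq_swap_le {F : Type*} [NormedAddCommGroup F] (u v w t : F) {e : ℝ} (he : 0 ≤ e)
    (h : ‖u‖ ^ 2 + ‖v‖ ^ 2 + e ≤ ‖w‖ ^ 2 + ‖t‖ ^ 2) :
    (‖u‖₊ : ℝ≥0∞) ^ 2 + (‖v‖₊ : ℝ≥0∞) ^ 2 + ENNReal.ofReal e ≤
      (‖w‖₊ : ℝ≥0∞) ^ 2 + (‖t‖₊ : ℝ≥0∞) ^ 2 := by
  simp only [enorm_sq_eq]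
  rw [← ENNReal.ofReal_add (by positivity) (by positivity),
    ← ENNReal.ofReal_add (by positivity) he,
    ← ENNReal.ofReal_add (by positivity) (by positivity)]
  exact ENNReal.ofReal_le_ofReal h

lemma measure_add_right_cancel' {α : Type*} [MeasurableSpace α] {a b c : Measure α}
    [IsFiniteMeasure c] (h : a + c = b + c) : a = b := by
  ext s hs
  have h2 : a s + c s = b s + c s := by
    have := congrArg (fun m : Measure α => m s) h
    simpa [Measure.add_apply] using this
  exact WithTop.add_right_cancel (measure_ne_top c s) h2

variable {d : ℕ} {M : EuclideanSpace ℝ (Fin d) → EuclideanSpace ℝ (Fin d)}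

local notation "E" => EuclideanSpace ℝ (Fin d)

lemma exists_mono (μsrc μtgt : Measure (EuclideanSpace ℝ (Fin d)))
    [IsProbabilityMeasure μsrc] [IsProbabilityMeasure μtgt]
    (hMmeas : Measurable M) (hMpush : μsrc.map M = μtgt)
    (hC : ∫⁻ x, (‖M x - x‖₊ : ℝ≥0∞) ^ 2 ∂μsrc ≠ ⊤)
    (hMopt : 2⁻¹ * ∫⁻ x, (‖M x - x‖₊ : ℝ≥0∞) ^ 2 ∂μsrc = W2sq μsrc μtgt) :
    ∃ A : Set (EuclideanSpace ℝ (Fin d)), MeasurableSet A ∧ μsrc Aᶜ = 0 ∧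
      ∀ x ∈ A, ∀ x' ∈ A, 0 ≤ ⟪x - x', M x - M x'⟫ := by
  classical
  set G : E → E × E := fun x => (x, M x) with hG_def
  have hG : Measurable G := measurable_id.prodMk hMmeas
  set γ : Measure (E × E) := μsrc.map G with hγ_def
  haveI : IsProbabilityMeasure γ := Measure.isProbabilityMeasure_map hG.aemeasurable
  set c : E × E → ℝ≥0∞ := fun p => (‖p.1 - p.2‖₊ : ℝ≥0∞) ^ 2 with hc_def
  have hcostm : Measurable c :=
    ((measurable_fst.sub measurable_snd).enorm).pow_const 2
  -- the cost of γ
  have hCγ : ∫⁻ p, c p ∂γ = ∫⁻ x, (‖M x - x‖₊ : ℝ≥0∞) ^ 2 ∂μsrc := by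
    rw [hγ_def, lintegral_map hcostm hG]
    refine lintegral_congr fun x => ?_
    show (‖x - M x‖₊ : ℝ≥0∞) ^ 2 = _
    rw [show x - M x = -(M x - x) by abel, nnnorm_neg]
  -- the everywhere-positive core of γ
  set K : Set (E × E) := γ.everywherePosSubset univ with hK_def
  have hKmeas : MeasurableSet K := MeasurableSet.univ.everywherePosSubset
  have hKc : γ Kᶜ = 0 := by
    have h := Measure.everywherePosSubset_ae_eq (μ := γ) MeasurableSet.univ
    have := Filter.EventuallyEq.symm h
    rw [← ae_eq_univ] at *
    exact h
  set A : Set E := G ⁻¹' K with hA_def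
  have hAmeas : MeasurableSet A := hG hKmeas
  have hAc : μsrc Aᶜ = 0 := by
    have : Aᶜ = G ⁻¹' Kᶜ := rfl
    rw [this, ← Measure.map_apply hG hKmeas.compl, ← hγ_def, hKc]
  refine ⟨A, hAmeas, hAc, ?_⟩
  intro x hx x' hx'
  by_contra hneg
  push_neg at hneg
  set δ : ℝ := -⟪x - x', M x - M x'⟫ / 2 with hδ_def
  have hδpos : 0 < δ := by simp only [hδ_def]; linarith
  -- continuity: find r > 0 such that on the product of balls the inner product is < -δ
  have hφcont : Continuous fun pq : (E × E) × (E × E) => ⟪pq.1.1 - pq.2.1, pq.1.2 - pq.2.2⟫ := by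
    exact Continuous.inner ((continuous_fst.comp continuous_fst).sub
      (continuous_fst.comp continuous_snd)) ((continuous_snd.comp continuous_fst).sub
      (continuous_snd.comp continuous_snd))
  have hval : ⟪(G x).1 - (G x').1, (G x).2 - (G x').2⟫ < -δ := by
    simp only [hG_def, hδ_def]; linarith
  obtain ⟨r, hrpos, hr⟩ : ∃ r > 0, ∀ p ∈ Metric.ball (G x) r, ∀ q ∈ Metric.ball (G x') r,
      ⟪p.1 - q.1, p.2 - q.2⟫ < -δ := by
    have hopen : IsOpen {pq : (E × E) × (E × E) | ⟪pq.1.1 - pq.2.1, pq.1.2 - pq.2.2⟫ < -δ} :=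
      isOpen_lt hφcont continuous_const
    have hmem : (G x, G x') ∈ {pq : (E × E) × (E × E) |
        ⟪pq.1.1 - pq.2.1, pq.1.2 - pq.2.2⟫ < -δ} := hval
    rcases Metric.isOpen_iff.1 hopen _ hmem with ⟨r, hrpos, hball⟩
    refine ⟨r, hrpos, fun p hp q hq => ?_⟩
    have : (p, q) ∈ Metric.ball ((G x), (G x')) r := by
      rw [Metric.mem_ball, Prod.dist_eq]
      exact max_lt hp hq
    exact hball this
  -- positive-measure neighborhoods
  set U : Set E := G ⁻¹' (Metric.ball (G x) r) with hU_def
  set V : Set E := G ⁻¹' (Metric.ball (G x') r) with hV_def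
  have hUmeas : MeasurableSet U := hG measurableSet_ball
  have hVmeas : MeasurableSet V := hG measurableSet_ball
  have hUpos : 0 < μsrc U := by
    rw [hU_def, ← Measure.map_apply hG measurableSet_ball, ← hγ_def]
    exact hx.2 _ (by rw [nhdsWithin_univ]; exact Metric.ball_mem_nhds _ hrpos)
  have hVpos : 0 < μsrc V := by
    rw [hV_def, ← Measure.map_apply hG measurableSet_ball, ← hγ_def]
    exact hx'.2 _ (by rw [nhdsWithin_univ]; exact Metric.ball_mem_nhds _ hrpos)
  have hUV : ∀ a ∈ U, ∀ b ∈ V, ⟪a - b, M a - M b⟫ < -δ := fun a ha b hb => hr (G a) ha (G b) hb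
  -- the swapping measures
  set ρ : Measure (E × E) := (μsrc.restrict U).prod (μsrc.restrict V) with hρ_def
  set m : ℝ≥0∞ := μsrc U * μsrc V with hm_def
  have hm_pos : 0 < m := ENNReal.mul_pos hUpos.ne' hVpos.ne'
  have hm_le : m ≤ 1 := by
    calc m ≤ 1 * 1 := mul_le_mul' prob_le_one prob_le_one
    _ = 1 := one_mul 1
  have hm_ne_top : m ≠ ⊤ := (hm_le.trans_lt one_lt_top).ne
  have hρuniv : ρ univ = m := by
    rw [hρ_def, ← Set.univ_prod_univ, Measure.prod_prod, Measure.restrict_apply_univ,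
      Measure.restrict_apply_univ]
  set a1 : E × E → E × E := fun z => (z.1, M z.1) with ha1_def
  set a2 : E × E → E × E := fun z => (z.2, M z.2) with ha2_def
  set b1 : E × E → E × E := fun z => (z.1, M z.2) with hb1_def
  set b2 : E × E → E × E := fun z => (z.2, M z.1) with hb2_def
  have ha1 : Measurable a1 := measurable_fst.prodMk (hMmeas.comp measurable_fst)
  have ha2 : Measurable a2 := measurable_snd.prodMk (hMmeas.comp measurable_snd)
  have hb1 : Measurable b1 := measurable_fst.prodMk (hMmeas.comp measurable_snd)
  have hb2 : Measurable b2 := measurable_snd.prodMk (hMmeas.comp measurable_fst)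
  set A1 : Measure (E × E) := ρ.map a1 with hA1_def
  set A2 : Measure (E × E) := ρ.map a2 with hA2_def
  set B1 : Measure (E × E) := ρ.map b1 with hB1_def
  set B2 : Measure (E × E) := ρ.map b2 with hB2_def
  have huniv : ∀ f : E × E → E × E, Measurable f → (ρ.map f) univ = m := fun f hf => by
    rw [Measure.map_apply hf MeasurableSet.univ, preimage_univ, hρuniv]
  -- A1, A2 are dominated by γ
  have hA1eq : A1 = (μsrc V) • ((μsrc.restrict U).map G) := by
    rw [hA1_def, show a1 = G ∘ Prod.fst from rfl, ← Measure.map_map hG measurable_fst, hρ_def,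
      Measure.map_fst_prod, Measure.restrict_apply_univ, Measure.map_smul]
  have hA2eq : A2 = (μsrc U) • ((μsrc.restrict V).map G) := by
    rw [hA2_def, show a2 = G ∘ Prod.snd from rfl, ← Measure.map_map hG measurable_snd, hρ_def,
      Measure.map_snd_prod, Measure.restrict_apply_univ, Measure.map_smul]
  have hA1le : A1 ≤ γ := by
    refine Measure.le_iff.2 fun s hs => ?_
    rw [hA1eq, Measure.smul_apply, smul_eq_mul]
    calc μsrc V * ((μsrc.restrict U).map G) s ≤ 1 * γ s := by
          refine mul_le_mul' prob_le_one ?_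
          exact Measure.le_iff'.1 (Measure.map_mono Measure.restrict_le_self hG) s
    _ = γ s := one_mul _
  have hA2le : A2 ≤ γ := by
    refine Measure.le_iff.2 fun s hs => ?_
    rw [hA2eq, Measure.smul_apply, smul_eq_mul]
    calc μsrc U * ((μsrc.restrict V).map G) s ≤ 1 * γ s := by
          refine mul_le_mul' prob_le_one ?_
          exact Measure.le_iff'.1 (Measure.map_mono Measure.restrict_le_self hG) s
    _ = γ s := one_mul _
  -- finiteness
  haveI : IsFiniteMeasure ρ := by
    constructor; rw [hρuniv]; exact hm_ne_top.lt_top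
  haveI hfinA1 : IsFiniteMeasure A1 := ⟨by rw [hA1_def, huniv a1 ha1]; exact hm_ne_top.lt_top⟩
  haveI hfinA2 : IsFiniteMeasure A2 := ⟨by rw [hA2_def, huniv a2 ha2]; exact hm_ne_top.lt_top⟩
  haveI hfinB1 : IsFiniteMeasure B1 := ⟨by rw [hB1_def, huniv b1 hb1]; exact hm_ne_top.lt_top⟩
  haveI hfinB2 : IsFiniteMeasure B2 := ⟨by rw [hB2_def, huniv b2 hb2]; exact hm_ne_top.lt_top⟩
  set κ : Measure (E × E) := A1 + A2 with hκ_def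
  set lam : Measure (E × E) := B1 + B2 with hlam_def
  haveI : IsFiniteMeasure κ := by rw [hκ_def]; infer_instance
  haveI : IsFiniteMeasure lam := by rw [hlam_def]; infer_instance
  haveI : IsFiniteMeasure ((2⁻¹ : ℝ≥0∞) • κ) := by
    constructor
    rw [Measure.smul_apply, smul_eq_mul]
    exact ENNReal.mul_lt_top (by norm_num) (measure_lt_top κ univ)
  -- marginal equalities between κ and lam
  have hfstkl : κ.map Prod.fst = lam.map Prod.fst := by
    rw [hκ_def, hlam_def, Measure.map_add _ _ measurable_fst, Measure.map_add _ _ measurable_fst,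
      hA1_def, hA2_def, hB1_def, hB2_def,
      Measure.map_map measurable_fst ha1, Measure.map_map measurable_fst ha2,
      Measure.map_map measurable_fst hb1, Measure.map_map measurable_fst hb2]
    rfl
  have hsndkl : κ.map Prod.snd = lam.map Prod.snd := by
    rw [hκ_def, hlam_def, Measure.map_add _ _ measurable_snd, Measure.map_add _ _ measurable_snd,
      hA1_def, hA2_def, hB1_def, hB2_def,
      Measure.map_map measurable_snd ha1, Measure.map_map measurable_snd ha2,
      Measure.map_map measurable_snd hb1, Measure.map_map measurable_snd hb2]
    exact add_comm _ _
  -- domination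
  have hhalf : (2⁻¹ : ℝ≥0∞) • κ ≤ γ := by
    refine Measure.le_iff.2 fun s hs => ?_
    rw [Measure.smul_apply, hκ_def, Measure.add_apply, smul_eq_mul]
    calc 2⁻¹ * (A1 s + A2 s) ≤ 2⁻¹ * (γ s + γ s) := by
          refine mul_le_mul' le_rfl (add_le_add ?_ ?_)
          · exact Measure.le_iff'.1 hA1le s
          · exact Measure.le_iff'.1 hA2le s
    _ = γ s := by
          rw [← two_mul, ← mul_assoc, ENNReal.inv_mul_cancel (by norm_num) (by norm_num), one_mul]
  -- the competitor coupling
  set γ' : Measure (E × E) := (γ - (2⁻¹ : ℝ≥0∞) • κ) + (2⁻¹ : ℝ≥0∞) • lam with hγ'_def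
  have hmaster : γ' + (2⁻¹ : ℝ≥0∞) • κ = γ + (2⁻¹ : ℝ≥0∞) • lam := by
    rw [hγ'_def, add_assoc, add_comm ((2⁻¹ : ℝ≥0∞) • lam) ((2⁻¹ : ℝ≥0∞) • κ), ← add_assoc,
      Measure.sub_add_cancel_of_le hhalf]
  clear_value γ'
  clear hγ'_def
  -- γ' is a probability measure
  have hκuniv : κ univ = m + m := by
    rw [hκ_def, Measure.add_apply, hA1_def, hA2_def, huniv a1 ha1, huniv a2 ha2]
  have hlamuniv : lam univ = m + m := by
    rw [hlam_def, Measure.add_apply, hB1_def, hB2_def, huniv b1 hb1, huniv b2 hb2]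
  have hγ'univ : γ' univ = 1 := by
    have h := congrArg (fun μm : Measure (E × E) => μm univ) hmaster
    simp only [Measure.add_apply, Measure.smul_apply, smul_eq_mul] at h
    rw [hκuniv, hlamuniv] at h
    have h2 : γ' univ = γ univ :=
      WithTop.add_right_cancel
        (ENNReal.mul_ne_top (by norm_num) (ENNReal.add_ne_top.2 ⟨hm_ne_top, hm_ne_top⟩)) h
    rw [h2, measure_univ]
  haveI hγ'prob : IsProbabilityMeasure γ' := ⟨hγ'univ⟩
  -- marginals of γ'
  have hγfst : γ.map Prod.fst = μsrc := by
    rw [hγ_def, Measure.map_map measurable_fst hG]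
    exact Measure.map_id
  have hγsnd : γ.map Prod.snd = μtgt := by
    rw [hγ_def, Measure.map_map measurable_snd hG]
    exact hMpush
  haveI : IsFiniteMeasure ((2⁻¹ : ℝ≥0∞) • (Measure.map Prod.fst lam)) := by
    constructor
    rw [Measure.smul_apply, smul_eq_mul]
    refine ENNReal.mul_lt_top (by norm_num) ?_
    rw [Measure.map_apply measurable_fst MeasurableSet.univ, preimage_univ, hlamuniv]
    exact (ENNReal.add_ne_top.2 ⟨hm_ne_top, hm_ne_top⟩).lt_top
  haveI : IsFiniteMeasure ((2⁻¹ : ℝ≥0∞) • (Measure.map Prod.snd lam)) := by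
    constructor
    rw [Measure.smul_apply, smul_eq_mul]
    refine ENNReal.mul_lt_top (by norm_num) ?_
    rw [Measure.map_apply measurable_snd MeasurableSet.univ, preimage_univ, hlamuniv]
    exact (ENNReal.add_ne_top.2 ⟨hm_ne_top, hm_ne_top⟩).lt_top
  have hγ'fst : γ'.map Prod.fst = μsrc := by
    have h := congrArg (Measure.map Prod.fst) hmaster
    rw [Measure.map_add _ _ measurable_fst, Measure.map_add _ _ measurable_fst,
      Measure.map_smul, Measure.map_smul, hfstkl, hγfst] at h
    exact measure_add_right_cancel' h
  have hγ'snd : γ'.map Prod.snd = μtgt := by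
    have h := congrArg (Measure.map Prod.snd) hmaster
    rw [Measure.map_add _ _ measurable_snd, Measure.map_add _ _ measurable_snd,
      Measure.map_smul, Measure.map_smul, hsndkl, hγsnd] at h
    exact measure_add_right_cancel' h
  -- cost comparison
  have hcκ : ∫⁻ p, c p ∂κ =
      ∫⁻ z, ((‖z.1 - M z.1‖₊ : ℝ≥0∞) ^ 2 + (‖z.2 - M z.2‖₊ : ℝ≥0∞) ^ 2) ∂ρ := by
    rw [hκ_def, lintegral_add_measure, hA1_def, hA2_def, lintegral_map hcostm ha1,
      lintegral_map hcostm ha2, ← lintegral_add_left (f := fun z => c (a1 z)) (hcostm.comp ha1)]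
  have hclam : ∫⁻ p, c p ∂lam =
      ∫⁻ z, ((‖z.1 - M z.2‖₊ : ℝ≥0∞) ^ 2 + (‖z.2 - M z.1‖₊ : ℝ≥0∞) ^ 2) ∂ρ := by
    rw [hlam_def, lintegral_add_measure, hB1_def, hB2_def, lintegral_map hcostm hb1,
      lintegral_map hcostm hb2, ← lintegral_add_left (f := fun z => c (b1 z)) (hcostm.comp hb1)]
  -- ρ-a.e. points lie in U ×ˢ V
  have haeρ : ∀ᵐ z ∂ρ, z.1 ∈ U ∧ z.2 ∈ V := by
    rw [ae_iff]
    have hsub : {z : E × E | ¬(z.1 ∈ U ∧ z.2 ∈ V)} ⊆ (Uᶜ ×ˢ univ) ∪ (univ ×ˢ Vᶜ) := by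
      intro z hz
      by_cases h1 : z.1 ∈ U
      · right; exact ⟨trivial, fun h2 => hz ⟨h1, h2⟩⟩
      · left; exact ⟨h1, trivial⟩
    refine measure_mono_null hsub (measure_union_null ?_ ?_)
    · rw [hρ_def, Measure.prod_prod, Measure.restrict_apply hUmeas.compl]
      simp
    · rw [hρ_def, Measure.prod_prod, Measure.restrict_apply hVmeas.compl]
      simp
  -- the key strict inequality
  have hstep : ∫⁻ p, c p ∂lam + ENNReal.ofReal (2 * δ) * m ≤ ∫⁻ p, c p ∂κ := by
    rw [hcκ, hclam, ← hρuniv, ← lintegral_const (ENNReal.ofReal (2 * δ)), ← lintegral_add_left]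
    swap
    · exact (((measurable_fst.sub (hMmeas.comp measurable_snd)).enorm).pow_const 2).add
        (((measurable_snd.sub (hMmeas.comp measurable_fst)).enorm).pow_const 2)
    refine lintegral_mono_ae (haeρ.mono fun z hz => ?_)
    obtain ⟨h1, h2⟩ := hz
    have hip : ⟪z.1 - z.2, M z.1 - M z.2⟫ < -δ := hUV z.1 h1 z.2 h2
    have hreal : ‖z.1 - M z.2‖ ^ 2 + ‖z.2 - M z.1‖ ^ 2 + 2 * δ ≤
        ‖z.1 - M z.1‖ ^ 2 + ‖z.2 - M z.2‖ ^ 2 := by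
      have hid := swap_identity z.1 z.2 (M z.1) (M z.2)
      linarith
    exact enorm_sq_swap_le _ _ _ _ (by positivity) hreal
  have hκfin : ∫⁻ p, c p ∂κ ≠ ⊤ := by
    have hle : ∫⁻ p, c p ∂κ ≤ ∫⁻ p, c p ∂γ + ∫⁻ p, c p ∂γ := by
      calc ∫⁻ p, c p ∂κ ≤ ∫⁻ p, c p ∂(γ + γ) :=
            lintegral_mono' (hκ_def ▸ add_le_add hA1le hA2le) le_rfl
      _ = _ := lintegral_add_measure _ _ _
    rw [hCγ] at hle
    exact (hle.trans_lt (ENNReal.add_lt_top.2 ⟨hC.lt_top, hC.lt_top⟩)).ne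
  have hlamfin : ∫⁻ p, c p ∂lam ≠ ⊤ := by
    refine ((le_trans (le_add_right le_rfl) hstep).trans_lt hκfin.lt_top).ne
  have hlamlt : ∫⁻ p, c p ∂lam < ∫⁻ p, c p ∂κ := by
    refine lt_of_lt_of_le ?_ hstep
    refine ENNReal.lt_add_right hlamfin ?_
    exact mul_ne_zero (by simp [ENNReal.ofReal_eq_zero]; linarith) hm_pos.ne'
  -- conclude: γ' has strictly smaller cost than γ
  have hκhalffin : (2⁻¹ : ℝ≥0∞) * ∫⁻ p, c p ∂κ ≠ ⊤ :=
    ENNReal.mul_ne_top (by norm_num) hκfin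
  have hcostmaster : ∫⁻ p, c p ∂γ' + 2⁻¹ * ∫⁻ p, c p ∂κ
      = ∫⁻ p, c p ∂γ + 2⁻¹ * ∫⁻ p, c p ∂lam := by
    have h := congrArg (fun μm : Measure (E × E) => ∫⁻ p, c p ∂μm) hmaster
    simpa [lintegral_add_measure, lintegral_smul_measure] using h
  have hγ'lt : ∫⁻ p, c p ∂γ' < ∫⁻ p, c p ∂γ := by
    have h1 : ∫⁻ p, c p ∂γ' + 2⁻¹ * ∫⁻ p, c p ∂κ < ∫⁻ p, c p ∂γ + 2⁻¹ * ∫⁻ p, c p ∂κ := by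
      rw [hcostmaster]
      refine ENNReal.add_lt_add_left ?_ ?_
      · rw [hCγ]; exact hC
      · exact (ENNReal.mul_lt_mul_iff_right (by norm_num) (by norm_num)).2 hlamlt
    exact (ENNReal.add_lt_add_iff_right hκhalffin).1 h1
  have hW2le : W2sq μsrc μtgt ≤ 2⁻¹ * ∫⁻ p, c p ∂γ' := by
    refine iInf_le_of_le γ' (iInf_le_of_le ⟨hγ'prob, hγ'fst, hγ'snd⟩ le_rfl)
  have : W2sq μsrc μtgt < W2sq μsrc μtgt := by
    calc W2sq μsrc μtgt ≤ 2⁻¹ * ∫⁻ p, c p ∂γ' := hW2le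
    _ < 2⁻¹ * ∫⁻ p, c p ∂γ := by
        exact (ENNReal.mul_lt_mul_iff_right (by norm_num) (by norm_num)).2 hγ'lt
    _ = W2sq μsrc μtgt := by rw [hCγ]; exact hMopt
  exact absurd this (lt_irrefl _)

/-- if an optimal Monge map `M⋆` exists, then there is a feasible policy
`(π⋆_0,…,π⋆_H)` whose dynamic cost equals `W₂²(μsrc, μtgt)`, and which can be chosen so
that `π̄⋆_h(x) = x + ((h+1)/(H+1))(M⋆(x) − x)` for `μsrc`-a.e. `x` and every `h ≤ H`. -/
theorem stmt5 {d : ℕ} (hd : 1 ≤ d) (H : ℕ)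
    (μsrc μtgt : Measure (EuclideanSpace ℝ (Fin d)))
    [IsProbabilityMeasure μsrc] [IsProbabilityMeasure μtgt]
    (h2src : ∫⁻ x, (‖x‖₊ : ℝ≥0∞) ^ 2 ∂μsrc ≠ ⊤)
    (h2tgt : ∫⁻ x, (‖x‖₊ : ℝ≥0∞) ^ 2 ∂μtgt ≠ ⊤)
    (M : EuclideanSpace ℝ (Fin d) → EuclideanSpace ℝ (Fin d))
    (hMmeas : Measurable M) (hMpush : μsrc.map M = μtgt)
    (hMopt : 2⁻¹ * ∫⁻ x, (‖M x - x‖₊ : ℝ≥0∞) ^ 2 ∂μsrc = W2sq μsrc μtgt) :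
    ∃ π : ℕ → EuclideanSpace ℝ (Fin d) → EuclideanSpace ℝ (Fin d),
      (∀ h ≤ H, Measurable (π h)) ∧
      μsrc.map (trajComp π (H + 1)) = μtgt ∧
      ((H : ℝ≥0∞) + 1) / 2 *
          ∑ h ∈ Finset.range (H + 1),
            ∫⁻ x, (‖trajComp π (h + 1) x - trajComp π h x‖₊ : ℝ≥0∞) ^ 2 ∂μsrc =
        W2sq μsrc μtgt ∧
      ∀ h ≤ H, ∀ᵐ x ∂μsrc,
        trajComp π (h + 1) x = x + (((h : ℝ) + 1) / ((H : ℝ) + 1)) • (M x - x) := by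
  classical
  -- finiteness of the transport cost
  have hMsq : ∫⁻ x, (‖M x‖₊ : ℝ≥0∞) ^ 2 ∂μsrc = ∫⁻ y, (‖y‖₊ : ℝ≥0∞) ^ 2 ∂μtgt := by
    rw [← hMpush, lintegral_map (show Measurable fun y : EuclideanSpace ℝ (Fin d) => (‖y‖₊ : ℝ≥0∞) ^ 2 from (measurable_id'.enorm).pow_const 2) hMmeas]
  have hC : ∫⁻ x, (‖M x - x‖₊ : ℝ≥0∞) ^ 2 ∂μsrc ≠ ⊤ := by
    have hint : ∫⁻ x, (‖M x - x‖₊ : ℝ≥0∞) ^ 2 ∂μsrc ≤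
        ∫⁻ x, (2 * (‖M x‖₊ : ℝ≥0∞) ^ 2 + 2 * (‖x‖₊ : ℝ≥0∞) ^ 2) ∂μsrc :=
      lintegral_mono fun x => enorm_sq_sub_le _ _
    rw [lintegral_add_left (show Measurable fun x => 2 * (‖M x‖₊ : ℝ≥0∞) ^ 2 from ((hMmeas.enorm).pow_const 2).const_mul 2),
      lintegral_const_mul 2 (show Measurable fun x => (‖M x‖₊ : ℝ≥0∞) ^ 2 from (hMmeas.enorm).pow_const 2),
      lintegral_const_mul 2 (show Measurable fun y : EuclideanSpace ℝ (Fin d) => (‖y‖₊ : ℝ≥0∞) ^ 2 from (measurable_id'.enorm).pow_const 2), hMsq] at hint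
    refine (hint.trans_lt ?_).ne
    exact ENNReal.add_lt_top.2 ⟨ENNReal.mul_lt_top (by norm_num) h2tgt.lt_top,
      ENNReal.mul_lt_top (by norm_num) h2src.lt_top⟩
  obtain ⟨A, hAmeas, hAc, hmono⟩ := exists_mono μsrc μtgt hMmeas hMpush hC hMopt
  -- the interpolation maps
  set S : ℕ → EuclideanSpace ℝ (Fin d) → EuclideanSpace ℝ (Fin d) :=
    fun h x => x + (((h : ℝ)) / ((H : ℝ) + 1)) • (M x - x) with hS_def
  have hHpos : (0 : ℝ) < (H : ℝ) + 1 := by positivity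
  have hSmeas : ∀ h, Measurable (S h) := fun h =>
    measurable_id.add ((show Measurable fun x => M x - x from hMmeas.sub measurable_id).const_smul (((h : ℝ)) / ((H : ℝ) + 1)))
  have hS0 : ∀ x, S 0 x = x := fun x => by simp [hS_def]
  have hStop : ∀ x, S (H + 1) x = M x := fun x => by
    rw [hS_def]
    simp only [Nat.cast_add, Nat.cast_one]
    rw [div_self hHpos.ne', one_smul]
    abel
  -- injectivity on A
  have hinj : ∀ h ≤ H, ∀ x ∈ A, ∀ y ∈ A, S h x = S h y → x = y := by
    intro h hh x hx y hy heq
    set t : ℝ := (h : ℝ) / ((H : ℝ) + 1) with ht_def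
    have ht0 : 0 ≤ t := by positivity
    have ht1 : t < 1 := by
      rw [ht_def, div_lt_one hHpos]
      exact_mod_cast Nat.lt_succ_of_le hh
    have h0 : (1 - t) • (x - y) + t • (M x - M y) = 0 := by
      have hz : S h x - S h y = 0 := sub_eq_zero.mpr heq
      rw [← hz, hS_def]
      simp only [smul_sub, sub_smul, one_smul]
      abel
    have h1 : (1 - t) * ‖x - y‖ ^ 2 + t * ⟪x - y, M x - M y⟫ = 0 := by
      have h2 := congrArg (fun v => ⟪x - y, v⟫) h0
      simp only [inner_add_right, inner_smul_right, inner_zero_right] at h2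
      rw [real_inner_self_eq_norm_sq] at h2
      exact h2
    have h3 : 0 ≤ ⟪x - y, M x - M y⟫ := hmono x hx y hy
    have h4 : ‖x - y‖ ^ 2 = 0 := by nlinarith [sq_nonneg ‖x - y‖]
    have h5 : x - y = 0 := by
      rw [pow_eq_zero_iff (two_ne_zero), norm_eq_zero] at h4
      exact h4
    exact sub_eq_zero.mp h5
  -- the policy
  haveI : StandardBorelSpace A := hAmeas.standardBorel
  set π : ℕ → EuclideanSpace ℝ (Fin d) → EuclideanSpace ℝ (Fin d) := fun h =>
    if hh : h ≤ H then
      Function.extend (fun a : A => S h (a : EuclideanSpace ℝ (Fin d)))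
        (fun a : A => S (h + 1) (a : EuclideanSpace ℝ (Fin d))) id
    else id with hπ_def
  have hπpos : ∀ h, h ≤ H → π h =
      Function.extend (fun a : A => S h (a : EuclideanSpace ℝ (Fin d)))
        (fun a : A => S (h + 1) (a : EuclideanSpace ℝ (Fin d))) id := fun h hh => by
    rw [hπ_def]; exact dif_pos hh
  have hemb : ∀ h, h ≤ H →
      MeasurableEmbedding (fun a : A => S h (a : EuclideanSpace ℝ (Fin d))) := fun h hh =>
    ((hSmeas h).comp measurable_subtype_coe).measurableEmbedding
      (fun a b hab => Subtype.ext (hinj h hh a a.2 b b.2 hab))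
  have hπmeas : ∀ h, h ≤ H → Measurable (π h) := fun h hh => by
    rw [hπpos h hh]
    exact (hemb h hh).measurable_extend ((hSmeas (h + 1)).comp measurable_subtype_coe)
      measurable_id
  have hπap : ∀ h, h ≤ H → ∀ x, ∀ hx : x ∈ A, π h (S h x) = S (h + 1) x := fun h hh x hx => by
    rw [hπpos h hh]
    exact (hemb h hh).injective.extend_apply _ _ ⟨x, hx⟩
  have htraj : ∀ x ∈ A, ∀ h, h ≤ H + 1 → trajComp π h x = S h x := by
    intro x hx h
    induction h with
    | zero => intro _; rw [hS0]; rfl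
    | succ n ih =>
      intro hn
      have hn' : n ≤ H := Nat.lt_succ_iff.mp hn
      show π n (trajComp π n x) = _
      rw [ih (Nat.le_succ_of_le hn'), hπap n hn' x hx]
  have haeA : ∀ᵐ x ∂μsrc, x ∈ A := by
    rw [ae_iff]
    exact hAc
  refine ⟨π, hπmeas, ?_, ?_, ?_⟩
  · -- pushforward
    have hmapae : trajComp π (H + 1) =ᵐ[μsrc] M :=
      haeA.mono fun x hx => by rw [htraj x hx (H + 1) le_rfl, hStop]
    rw [Measure.map_congr hmapae, hMpush]
  · -- cost
    set N : ℝ≥0∞ := (H : ℝ≥0∞) + 1 with hN_def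
    have hN0 : N ≠ 0 := by simp [hN_def]
    have hNt : N ≠ ⊤ := by simp [hN_def, ENNReal.add_ne_top]
    have hterm : ∀ h ≤ H,
        ∫⁻ x, (‖trajComp π (h + 1) x - trajComp π h x‖₊ : ℝ≥0∞) ^ 2 ∂μsrc =
          N⁻¹ ^ 2 * ∫⁻ x, (‖M x - x‖₊ : ℝ≥0∞) ^ 2 ∂μsrc := by
      intro h hh
      have hcoef : ((h : ℝ) + 1) / ((H : ℝ) + 1) - (h : ℝ) / ((H : ℝ) + 1) = ((H : ℝ) + 1)⁻¹ := by
        field_simp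
        ring
      have hcoe : (‖(((H : ℝ) + 1)⁻¹ : ℝ)‖₊ : ℝ≥0∞) = N⁻¹ := by
        rw [← enorm_eq_nnnorm, Real.enorm_eq_ofReal (by positivity), ENNReal.ofReal_inv_of_pos hHpos,
          ENNReal.ofReal_add (by positivity) (by norm_num), ENNReal.ofReal_natCast,
          ENNReal.ofReal_one, hN_def]
      have he : ∀ᵐ x ∂μsrc, (‖trajComp π (h + 1) x - trajComp π h x‖₊ : ℝ≥0∞) ^ 2
          = N⁻¹ ^ 2 * (‖M x - x‖₊ : ℝ≥0∞) ^ 2 := haeA.mono fun x hx => by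
        rw [htraj x hx (h + 1) (Nat.succ_le_succ hh), htraj x hx h (hh.trans (Nat.le_succ H))]
        have hdiff : S (h + 1) x - S h x = (((H : ℝ) + 1)⁻¹ : ℝ) • (M x - x) := by
          rw [hS_def]
          simp only [Nat.cast_add, Nat.cast_one]
          rw [← hcoef, sub_smul]
          abel
        rw [hdiff, nnnorm_smul, ENNReal.coe_mul, hcoe, mul_pow]
      rw [lintegral_congr_ae he,
        lintegral_const_mul _ (show Measurable fun x => (‖M x - x‖₊ : ℝ≥0∞) ^ 2 from (hMmeas.sub measurable_id').enorm.pow_const 2)]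
    have hsum : ∑ h ∈ Finset.range (H + 1),
        ∫⁻ x, (‖trajComp π (h + 1) x - trajComp π h x‖₊ : ℝ≥0∞) ^ 2 ∂μsrc
        = (H + 1 : ℕ) • (N⁻¹ ^ 2 * ∫⁻ x, (‖M x - x‖₊ : ℝ≥0∞) ^ 2 ∂μsrc) := by
      rw [Finset.sum_congr rfl fun h hh => hterm h (Finset.mem_range_succ_iff.mp hh),
        Finset.sum_const, Finset.card_range]
    rw [hsum, nsmul_eq_mul]
    have hcast : ((H + 1 : ℕ) : ℝ≥0∞) = N := by
      rw [hN_def]; push_cast; ring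
    rw [hcast]
    have hNN : N * N⁻¹ = 1 := ENNReal.mul_inv_cancel hN0 hNt
    calc N / 2 * (N * (N⁻¹ ^ 2 * ∫⁻ x, (‖M x - x‖₊ : ℝ≥0∞) ^ 2 ∂μsrc))
        = (N * N⁻¹) * ((N * N⁻¹) * (2⁻¹ * ∫⁻ x, (‖M x - x‖₊ : ℝ≥0∞) ^ 2 ∂μsrc)) := by
          rw [pow_two, div_eq_mul_inv]; ring
      _ = 2⁻¹ * ∫⁻ x, (‖M x - x‖₊ : ℝ≥0∞) ^ 2 ∂μsrc := by rw [hNN, one_mul, one_mul]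
      _ = W2sq μsrc μtgt := hMopt
  · -- a.e. description
    intro h hh
    refine haeA.mono fun x hx => ?_
    rw [htraj x hx (h + 1) (Nat.succ_le_succ hh), hS_def]
    push_cast
    ring_nf
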